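/- Harmonic-coupling identity underlying the ξ-AR estimator: let ξ : 𝒬 → ℝ, U_0 : 𝒬 → ℝ, and R : Λ × ℝ → ℝ satisfy the normalization Σ_{ζ∈Λ} exp(−R(ζ,x)) = 1 for every x ∈ ℝ, and define the expanded potential U(λ,q) := U_0(q) + R(λ, ξ(q)) and the effective restraining potential ℬ_a(x) := ln Σ_{ζ∈Λ} exp(a(ζ) − R(ζ,x)). Then for every q ∈ 𝒬, the conditioned total weighing function satisfies 𝕟_a(q) := Σ_{λ∈Λ} exp(−U(λ,q)) / Σ_{ζ∈Λ} exp(a(ζ) − U(ζ,q)) = exp(−ℬ_a(ξ(q))); in particular the reweighting factor of each sampled configuration depends on q only through ξ(q). -/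
import Mathlib

/-- **Harmonic-coupling identity underlying the ξ-AR estimator.**  If the restraining
potential satisfies the normalization `Σ_ζ exp(−R(ζ,x)) = 1` for every `x`, and the
expanded potential is `U(λ,q) = U0(q) + R(λ,ξ(q))`, then the conditioned total
weighing function satisfies
`𝕟_a(q) = Σ_λ exp(−U(λ,q)) / Σ_ζ exp(a(ζ) − U(ζ,q)) = exp(−ℬ_a(ξ(q)))`, with
`ℬ_a(x) = ln Σ_ζ exp(a(ζ) − R(ζ,x))`; in particular the reweighting factor of each
sampled configuration depends on `q` only through `ξ(q)`. -/
theorem harmonic_coupling_reweighting_factor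
    {Λ Q : Type*} [Fintype Λ] [Nonempty Λ]
    (a : Λ → ℝ) (ξ : Q → ℝ) (U0 : Q → ℝ) (R : Λ → ℝ → ℝ)
    (hnorm : ∀ x : ℝ, ∑ ζ : Λ, Real.exp (-R ζ x) = 1)
    (U : Λ → Q → ℝ) (hU : ∀ l q, U l q = U0 q + R l (ξ q))
    (B : ℝ → ℝ) (hB : ∀ x, B x = Real.log (∑ ζ : Λ, Real.exp (a ζ - R ζ x)))
    (q : Q) :
    (∑ l : Λ, Real.exp (-U l q)) / (∑ ζ : Λ, Real.exp (a ζ - U ζ q))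
      = Real.exp (-B (ξ q)) := by
  have hS : (0:ℝ) < ∑ ζ : Λ, Real.exp (a ζ - R ζ (ξ q)) :=
    Finset.sum_pos (fun ζ _ => Real.exp_pos _) Finset.univ_nonempty
  have hnum : (∑ l : Λ, Real.exp (-U l q)) = Real.exp (-U0 q) := by
    have := hnorm (ξ q)
    calc (∑ l : Λ, Real.exp (-U l q))
        = ∑ l : Λ, Real.exp (-U0 q) * Real.exp (-R l (ξ q)) := by
          refine Finset.sum_congr rfl fun l _ => ?_
          rw [hU, ← Real.exp_add]; ring_nf
      _ = Real.exp (-U0 q) * ∑ l : Λ, Real.exp (-R l (ξ q)) := by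
          rw [Finset.mul_sum]
      _ = Real.exp (-U0 q) := by rw [this, mul_one]
  have hden : (∑ ζ : Λ, Real.exp (a ζ - U ζ q))
      = Real.exp (-U0 q) * ∑ ζ : Λ, Real.exp (a ζ - R ζ (ξ q)) := by
    rw [Finset.mul_sum]
    refine Finset.sum_congr rfl fun ζ _ => ?_
    rw [hU, ← Real.exp_add]; ring_nf
  rw [hnum, hden, hB]
  rw [Real.exp_neg (Real.log _), Real.exp_log hS]
  field_simp
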